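/- Every absorption-dominant winning strategy of Player 0 from a position v in a finite Büchi game is persistent: along every single play consistent with the strategy, the strategy never makes two different choices at the same position. -/

import Mathlib

/-- A Büchi game: positions `V` partitioned into Player 0's positions `V0` and
Player 1's positions `V1`, edge relation `E` with every position having a
successor, and target set `F`. -/
structure BuchiGame (V : Type*) where
  V0 : Set V
  V1 : Set V
  E : V → V → Prop
  F : Set V
  cover : ∀ v, v ∈ V0 ∨ v ∈ V1
  disjoint : ∀ v, ¬(v ∈ V0 ∧ v ∈ V1)
  nonempty_succ : ∀ v, ∃ w, E v w

/-- A strategy of Player 0 from `v0`, represented as a subtree of the tree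
unraveling of the game: a set of finite paths from `v0` which is prefix-closed,
has a unique chosen successor at nodes ending in Player 0 positions, and all
successors at nodes ending in Player 1 positions. -/
structure BuchiStrategy {V : Type*} (G : BuchiGame V) (v0 : V) where
  tree : Set (List V)
  root_mem : [v0] ∈ tree
  isPath : ∀ ρ ∈ tree, ρ.head? = some v0 ∧ List.Chain' G.E ρ
  prefix_closed : ∀ (ρ : List V) (v : V), ρ ≠ [] → ρ ++ [v] ∈ tree → ρ ∈ tree
  choice0 : ∀ (ρ : List V) (v : V), ρ ++ [v] ∈ tree → v ∈ G.V0 →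
    ∃! w : V, ρ ++ [v, w] ∈ tree
  choice1 : ∀ (ρ : List V) (v : V), ρ ++ [v] ∈ tree → v ∈ G.V1 →
    ∀ w : V, G.E v w → ρ ++ [v, w] ∈ tree

namespace BuchiStrategy

variable {V : Type*} {G : BuchiGame V} {v0 : V}

/-- The number of occurrences (in `ℕ∞`) of the edge `e` in the strategy tree. -/
noncomputable def edgeCount (S : BuchiStrategy G v0) (e : V × V) : ℕ∞ :=
  {ρ : List V | ρ ++ [e.1, e.2] ∈ S.tree}.encard

/-- `S₁` absorbs `S₂`: every edge occurs in `S₁` at most as often as in `S₂`. -/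
def Absorbs (S₁ S₂ : BuchiStrategy G v0) : Prop :=
  ∀ e : V × V, S₁.edgeCount e ≤ S₂.edgeCount e

/-- `S₁` strictly absorbs `S₂`. -/
def StrictlyAbsorbs (S₁ S₂ : BuchiStrategy G v0) : Prop :=
  Absorbs S₁ S₂ ∧ ∃ e : V × V, S₁.edgeCount e < S₂.edgeCount e

/-- A strategy is absorption-dominant from `v0` if no strategy strictly absorbs it. -/
def AbsorptionDominant (S : BuchiStrategy G v0) : Prop :=
  ∀ S' : BuchiStrategy G v0, ¬ StrictlyAbsorbs S' S

/-- A strategy is positional if all occurrences of any Player 0 position have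
the same chosen successor. -/
def Positional (S : BuchiStrategy G v0) : Prop :=
  ∀ v ∈ G.V0, ∀ (ρ ρ' : List V) (w w' : V),
    ρ ++ [v, w] ∈ S.tree → ρ' ++ [v, w'] ∈ S.tree → w = w'

/-- An infinite play consistent with the strategy: all finite prefixes lie in
the strategy tree. -/
def ConsistentPlay (S : BuchiStrategy G v0) (f : ℕ → V) : Prop :=
  ∀ n : ℕ, (List.range (n + 1)).map f ∈ S.tree

/-- A strategy is winning if every consistent play visits `F` infinitely often. -/
def Winning (S : BuchiStrategy G v0) : Prop :=
  ∀ f : ℕ → V, S.ConsistentPlay f → ∀ n : ℕ, ∃ m : ℕ, n ≤ m ∧ f m ∈ G.F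

end BuchiStrategy

namespace BuchiAux

variable {V : Type*} {G : BuchiGame V} {v0 : V}

/-- Simulation of a strategy tree through a "jump" function on host nodes. -/
def hostFn (jmp : List V → List V) (π : List V) : List V :=
  π.foldl (fun h u => jmp h ++ [u]) []

lemma hostFn_nil (jmp : List V → List V) : hostFn jmp [] = [] := rfl

lemma hostFn_snoc (jmp : List V → List V) (π : List V) (u : V) :
    hostFn jmp (π ++ [u]) = jmp (hostFn jmp π) ++ [u] := by
  simp [hostFn, List.foldl_append]

lemma hostFn_getLast? (jmp : List V → List V) (π : List V) (h : π ≠ []) :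
    (hostFn jmp π).getLast? = π.getLast? := by
  rcases List.eq_nil_or_concat π with rfl | ⟨L, b, rfl⟩
  · exact absurd rfl h
  · rw [List.concat_eq_append, hostFn_snoc, List.getLast?_concat, List.getLast?_concat]

/-- The simulated tree. -/
def jTree (S : BuchiStrategy G v0) (jmp : List V → List V) : Set (List V) :=
  {π | π ≠ [] ∧ ∀ σ, σ ≠ [] → σ <+: π → hostFn jmp σ ∈ S.tree}

lemma host_mem_of_mem {S : BuchiStrategy G v0} {jmp : List V → List V} {π : List V}
    (h : π ∈ jTree S jmp) : hostFn jmp π ∈ S.tree :=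
  h.2 π h.1 List.prefix_rfl

lemma mem_jTree_concat {S : BuchiStrategy G v0} {jmp : List V → List V} {σ : List V} {u : V}
    (hσ : σ ≠ []) :
    σ ++ [u] ∈ jTree S jmp ↔ σ ∈ jTree S jmp ∧ jmp (hostFn jmp σ) ++ [u] ∈ S.tree := by
  constructor
  · intro h
    refine ⟨⟨hσ, fun τ hτ hpre => h.2 τ hτ (hpre.trans (List.prefix_append _ _))⟩, ?_⟩
    have := h.2 (σ ++ [u]) (by simp) List.prefix_rfl
    rwa [hostFn_snoc] at this
  · rintro ⟨h1, h2⟩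
    refine ⟨by simp, fun τ hτ hpre => ?_⟩
    rcases List.prefix_concat_iff.mp hpre with rfl | hpre'
    · rwa [hostFn_snoc]
    · exact h1.2 τ hτ hpre'

/-- The host of any node of the form `ρ ++ [x, y]` also ends with `x, y`. -/
lemma host_edge {jmp : List V → List V}
    (hlast : ∀ h, (jmp h).getLast? = h.getLast?) (ρ : List V) (x y : V) :
    ∃ Z, hostFn jmp (ρ ++ [x, y]) = Z ++ [x, y] := by
  have h2 : ρ ++ [x, y] = (ρ ++ [x]) ++ [y] := by simp
  set K := jmp (hostFn jmp (ρ ++ [x])) with hK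
  have hKl : K.getLast? = some x := by
    rw [hK, hlast, hostFn_getLast? _ _ (by simp), List.getLast?_concat]
  have hKne : K ≠ [] := by rintro h0; rw [h0] at hKl; simp at hKl
  have hKd : K.dropLast ++ [x] = K := by
    have hg : K.getLast hKne = x := by
      have h3 := List.getLast?_eq_getLast hKne
      rw [h3] at hKl
      exact Option.some.inj hKl
    rw [← hg]; exact List.dropLast_append_getLast hKne
  refine ⟨K.dropLast, ?_⟩
  rw [h2, hostFn_snoc, ← hK, ← hKd]
  simp

lemma node_facts {S : BuchiStrategy G v0} {jmp : List V → List V}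
    (hmem : ∀ h ∈ S.tree, jmp h ∈ S.tree) (hlast : ∀ h, (jmp h).getLast? = h.getLast?)
    {ρ : List V} {v : V} (h : ρ ++ [v] ∈ jTree S jmp) :
    ∃ K, K ∈ S.tree ∧ K.dropLast ++ [v] = K ∧
      ∀ u, (ρ ++ [v, u] ∈ jTree S jmp ↔ K ++ [u] ∈ S.tree) := by
  set K := jmp (hostFn jmp (ρ ++ [v])) with hK
  have hhost : hostFn jmp (ρ ++ [v]) ∈ S.tree := host_mem_of_mem h
  have hKmem : K ∈ S.tree := hmem _ hhost
  have hKl : K.getLast? = some v := by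
    rw [hK, hlast, hostFn_getLast? _ _ (by simp), List.getLast?_concat]
  have hKne : K ≠ [] := by rintro h0; rw [h0] at hKl; simp at hKl
  have hKd : K.dropLast ++ [v] = K := by
    have hg : K.getLast hKne = v := by
      have h3 := List.getLast?_eq_getLast hKne
      rw [h3] at hKl
      exact Option.some.inj hKl
    rw [← hg]; exact List.dropLast_append_getLast hKne
  refine ⟨K, hKmem, hKd, fun u => ?_⟩
  have h2 : ρ ++ [v, u] = (ρ ++ [v]) ++ [u] := by simp
  rw [h2, mem_jTree_concat (by simp), ← hK]
  exact ⟨fun x => x.2, fun x => ⟨h, x⟩⟩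

lemma head?_concat {σ : List V} (hσ : σ ≠ []) (u : V) : (σ ++ [u]).head? = σ.head? := by
  cases σ with
  | nil => exact absurd rfl hσ
  | cons a l => simp

/-- The simulated tree is a strategy. -/
def jStrategy (S : BuchiStrategy G v0) (jmp : List V → List V) (hnil : jmp [] = [])
    (hmem : ∀ h ∈ S.tree, jmp h ∈ S.tree) (hlast : ∀ h, (jmp h).getLast? = h.getLast?) :
    BuchiStrategy G v0 where
  tree := jTree S jmp
  root_mem := by
    refine ⟨by simp, fun σ hσ hpre => ?_⟩
    have hlen : σ.length = 1 := by
      have h1 := hpre.length_le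
      have h2 : 0 < σ.length := List.length_pos_iff.mpr hσ
      simp at h1; omega
    have : σ = [v0] := hpre.eq_of_length (by simp [hlen])
    subst this
    have : hostFn jmp [v0] = [v0] := by
      have h0 : [v0] = ([] : List V) ++ [v0] := by simp
      rw [h0, hostFn_snoc, hostFn_nil, hnil]
    rw [this]; exact S.root_mem
  isPath := by
    intro π
    induction π using List.reverseRecOn with
    | nil => intro hπ; exact absurd rfl hπ.1
    | append_singleton σ u ih =>
      intro hπ
      rcases eq_or_ne σ [] with rfl | hσ
      · simp only [List.nil_append] at *
        have h1 : hostFn jmp [u] ∈ S.tree := host_mem_of_mem hπ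
        have h2 : hostFn jmp [u] = [u] := by
          have h0 : [u] = ([] : List V) ++ [u] := by simp
          rw [h0, hostFn_snoc, hostFn_nil, hnil]
        rw [h2] at h1
        exact ⟨(S.isPath _ h1).1, List.isChain_singleton u⟩
      · obtain ⟨hσT, hnext⟩ := (mem_jTree_concat hσ).mp hπ
        obtain ⟨hhead, hchain⟩ := ih hσT
        have hpath := (S.isPath _ hnext).2
        have hlink : ∀ x ∈ (jmp (hostFn jmp σ)).getLast?, G.E x u := by
          have h3 := (List.isChain_append.mp hpath).2.2
          intro x hx; exact h3 x hx u (by simp)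
        have hgl : (jmp (hostFn jmp σ)).getLast? = σ.getLast? := by
          rw [hlast, hostFn_getLast? _ _ hσ]
        constructor
        · rw [head?_concat hσ]; exact hhead
        · apply List.isChain_append.mpr
          refine ⟨hchain, List.isChain_singleton u, fun x hx y hy => ?_⟩
          simp at hy; subst hy
          exact hlink x (by rw [hgl]; exact hx)
  prefix_closed := fun ρ v hne h => ((mem_jTree_concat hne).mp h).1
  choice0 := by
    intro ρ v h hv
    obtain ⟨K, hKmem, hKd, hiff⟩ := node_facts hmem hlast h
    have hKc : ∀ u, K.dropLast ++ [v, u] = K ++ [u] := fun u => by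
      rw [← hKd]; simp
    obtain ⟨c, hc, hu⟩ := S.choice0 K.dropLast v (by rw [hKd]; exact hKmem) hv
    exact ⟨c, (hiff c).mpr (by rw [← hKc]; exact hc), fun u hu' => hu u
      (show K.dropLast ++ [v, u] ∈ S.tree by rw [hKc]; exact (hiff u).mp hu')⟩
  choice1 := by
    intro ρ v h hv u hE
    obtain ⟨K, hKmem, hKd, hiff⟩ := node_facts hmem hlast h
    have hKc : K.dropLast ++ [v, u] = K ++ [u] := by rw [← hKd]; simp
    refine (hiff u).mpr ?_
    rw [← hKc]
    exact S.choice1 K.dropLast v (by rw [hKd]; exact hKmem) hv u hE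

lemma jStrategy_tree (S : BuchiStrategy G v0) (jmp : List V → List V) (hnil) (hmem) (hlast) :
    (jStrategy S jmp hnil hmem hlast).tree = jTree S jmp := rfl

lemma dropLast_two (Z : List V) (x y : V) : (Z ++ [x, y]).dropLast.dropLast = Z := by
  have h : Z ++ [x, y] = (Z ++ [x]) ++ [y] := by simp
  rw [h, List.dropLast_concat, List.dropLast_concat]

end BuchiAux


open BuchiAux

open BuchiStrategy in
/-- Every absorption-dominant winning strategy is persistent: along every single
play consistent with it, the strategy never makes two different choices at the
same Player 0 position. -/
theorem absorption_dominant_winning_persistent {V : Type*} [Fintype V]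
    {G : BuchiGame V} {v : V} (S : BuchiStrategy G v)
    (hwin : S.Winning) (hdom : S.AbsorptionDominant) :
    ∀ f : ℕ → V, S.ConsistentPlay f →
      ∀ i j : ℕ, f i = f j → f i ∈ G.V0 → f (i + 1) = f (j + 1) := by
  intro f hcons
  classical
  suffices key : ∀ i j : ℕ, i < j → f i = f j → f i ∈ G.V0 → f (i+1) = f (j+1) by
    intro i j hij hV0
    rcases lt_trichotomy i j with h | rfl | h
    · exact key i j h hij hV0
    · rfl
    · exact (key j i h hij.symm (hij ▸ hV0)).symm
  intro i j hlt hij hV0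
  by_contra hne
  set w := f i with hw
  set a := f (i+1) with ha
  set b := f (j+1) with hb
  set ρi := (List.range (i+1)).map f with hρi
  set ρj := (List.range (j+1)).map f with hρj
  have hsnoc : ∀ n : ℕ, (List.range (n+2)).map f = (List.range (n+1)).map f ++ [f (n+1)] := by
    intro n
    rw [show n + 2 = (n+1) + 1 from rfl, List.range_succ, List.map_append]
    simp
  have hρiT : ρi ∈ S.tree := hcons i
  have hρjT : ρj ∈ S.tree := hcons j
  have hρia : ρi ++ [a] ∈ S.tree := by
    have h0 := hcons (i+1)
    rwa [show i + 1 + 1 = i + 2 from rfl, hsnoc i] at h0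
  have hρjb : ρj ++ [b] ∈ S.tree := by
    have h0 := hcons (j+1)
    rwa [show j + 1 + 1 = j + 2 from rfl, hsnoc j] at h0
  have hρilast : ρi.getLast? = some w := by
    rw [hρi, List.range_succ, List.map_append]
    simp only [List.map_cons, List.map_nil, List.getLast?_concat]
    rfl
  have hρjlast : ρj.getLast? = some w := by
    rw [hρj, List.range_succ, List.map_append]
    simp only [List.map_cons, List.map_nil, List.getLast?_concat]
    exact congrArg some hij.symm
  have hρilen : ρi.length = i + 1 := by simp [hρi]
  have hρjlen : ρj.length = j + 1 := by simp [hρj]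
  have hρine : ρi ≠ ([] : List V) := by
    intro h0; rw [h0] at hρilen; simp at hρilen
  have hρjne : ρj ≠ ([] : List V) := by
    intro h0; rw [h0] at hρjlen; simp at hρjlen
  have hpre : ρi <+: ρj := by
    have h1 : ρi = List.take (i+1) ρj := by
      rw [hρj, ← List.map_take, List.take_range, show (i+1) ⊓ (j+1) = i + 1 by omega, hρi]
    rw [h1]; exact List.take_prefix _ _
  have hprene : ρi ≠ ρj := by
    intro h0
    have := congrArg List.length h0
    rw [hρilen, hρjlen] at this; omega
  have hρid : ρi.dropLast ++ [w] = ρi := by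
    rw [hρi, List.range_succ, List.map_append]
    simp only [List.map_cons, List.map_nil, List.dropLast_concat]
    rfl
  have hρjd : ρj.dropLast ++ [w] = ρj := by
    rw [hρj, List.range_succ, List.map_append]
    simp only [List.map_cons, List.map_nil, List.dropLast_concat]
    exact congrArg (fun x => List.map f (List.range j) ++ [x]) hij
  by_cases hOcc : {ρ : List V | ρ ++ [w] ∈ S.tree}.Finite
  · -- CASE A : `w` occurs finitely often in the tree: cut the segment between the two visits.
    set jmp := fun h : List V => if h = ρi then ρj else h with hjmp
    have hnil : jmp [] = [] := by
      rw [hjmp]; simp only [if_neg (Ne.symm hρine)]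
    have hmemj : ∀ h ∈ S.tree, jmp h ∈ S.tree := by
      intro h hh
      by_cases hc : h = ρi
      · simp only [hjmp, if_pos hc]; exact hρjT
      · simp only [hjmp, if_neg hc]; exact hh
    have hlastj : ∀ h : List V, (jmp h).getLast? = h.getLast? := by
      intro h
      by_cases hc : h = ρi
      · show (if h = ρi then ρj else h).getLast? = h.getLast?
        rw [if_pos hc, hc, hρjlast, hρilast]
      · show (if h = ρi then ρj else h).getLast? = h.getLast?
        rw [if_neg hc]
    -- explicit formula for the host function
    have hostA : ∀ π : List V, hostFn jmp π =
        if ρi <+: π ∧ ρi ≠ π then ρj ++ π.drop (i+1) else π := by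
      intro π
      induction π using List.reverseRecOn with
      | nil =>
        rw [if_neg, hostFn_nil]
        rintro ⟨h1, -⟩
        exact hρine (List.prefix_nil.mp h1)
      | append_singleton σ u ih =>
        rw [hostFn_snoc, ih]
        by_cases h1 : ρi <+: σ
        · by_cases h2 : ρi = σ
          · rw [if_neg (by rintro ⟨-, h3⟩; exact h3 h2)]
            subst h2
            rw [show jmp ρi = ρj from by
              show (if ρi = ρi then ρj else ρi) = ρj
              rw [if_pos rfl]]
            rw [if_pos ⟨List.prefix_append _ _, by
              intro hg
              have := congrArg List.length hg
              rw [List.length_append, hρilen] at this; simp at this⟩]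
            have hdrop : (ρi ++ [u]).drop (i+1) = [u] := by rw [← hρilen, List.drop_left]
            rw [hdrop]
          · rw [if_pos ⟨h1, h2⟩]
            have hlen1 : i + 1 < σ.length := by
              rcases lt_or_eq_of_le h1.length_le with h | h
              · rw [hρilen] at h; exact h
              · exact absurd (h1.eq_of_length h) h2
            have hne2 : ρj ++ σ.drop (i+1) ≠ ρi := by
              intro hg
              have := congrArg List.length hg
              simp [hρjlen, hρilen] at this; omega
            rw [hjmp]; simp only [if_neg hne2]
            rw [if_pos ⟨h1.trans (List.prefix_append _ _), by
              intro hg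
              have := congrArg List.length hg
              rw [hρilen] at this; simp at this; omega⟩]
            rw [List.drop_append_of_le_length (by omega), List.append_assoc]
        · have hσne : σ ≠ ρi := fun hh => h1 (hh ▸ List.prefix_rfl)
          rw [if_neg (fun hh => h1 hh.1)]
          rw [hjmp]; simp only [if_neg hσne]
          rw [if_neg]
          rintro ⟨hp, hne'⟩
          rcases List.prefix_concat_iff.mp hp with he | hp'
          · exact hne' he
          · exact h1 hp'
    have hrec : ∀ π, ρi <+: π → ρi ++ π.drop (i+1) = π := by
      intro π hp
      have := List.prefix_iff_eq_append.mp hp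
      rwa [hρilen] at this
    have hinj : Function.Injective (hostFn jmp) := by
      intro π₁ π₂ hEq
      rw [hostA, hostA] at hEq
      have haux : ∀ τ₁ τ₂ : List V, (ρi <+: τ₁ ∧ ρi ≠ τ₁) → ¬(ρi <+: τ₂ ∧ ρi ≠ τ₂) →
          ρj ++ τ₁.drop (i+1) ≠ τ₂ := by
        rintro τ₁ τ₂ c1 c2 hg
        apply c2
        rw [← hg]
        constructor
        · exact hpre.trans (List.prefix_append _ _)
        · intro he
          have := congrArg List.length he
          have hlen1 : i + 1 < τ₁.length := by
            rcases lt_or_eq_of_le c1.1.length_le with h | h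
            · rw [hρilen] at h; exact h
            · exact absurd (c1.1.eq_of_length h) c1.2
          simp [hρilen, hρjlen] at this; omega
      by_cases c1 : ρi <+: π₁ ∧ ρi ≠ π₁ <;> by_cases c2 : ρi <+: π₂ ∧ ρi ≠ π₂
      · rw [if_pos c1, if_pos c2] at hEq
        have h3 := List.append_cancel_left hEq
        rw [← hrec _ c1.1, ← hrec _ c2.1, h3]
      · rw [if_pos c1, if_neg c2] at hEq
        exact absurd hEq (haux _ _ c1 c2)
      · rw [if_neg c1, if_pos c2] at hEq
        exact absurd hEq.symm (haux _ _ c2 c1)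
      · rw [if_neg c1, if_neg c2] at hEq; exact hEq
    set S' := jStrategy S jmp hnil hmemj hlastj with hS'
    -- the generic injection on edge-occurrence sets
    have hφ : ∀ e : V × V, ∃ φ : List V → List V,
        (∀ ρ, hostFn jmp (ρ ++ [e.1, e.2]) = φ ρ ++ [e.1, e.2]) := by
      intro e
      refine ⟨fun ρ => (hostFn jmp (ρ ++ [e.1, e.2])).dropLast.dropLast, fun ρ => ?_⟩
      obtain ⟨Z, hZ⟩ := host_edge hlastj ρ e.1 e.2
      show hostFn jmp (ρ ++ [e.1, e.2]) = (hostFn jmp (ρ ++ [e.1, e.2])).dropLast.dropLast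
        ++ [e.1, e.2]
      rw [hZ, dropLast_two]
    have habs : S'.Absorbs S := by
      intro e
      show Set.encard {ρ | ρ ++ [e.1, e.2] ∈ jTree S jmp} ≤ _
      obtain ⟨φ, hφe⟩ := hφ e
      have hinjOn : Set.InjOn φ {ρ | ρ ++ [e.1, e.2] ∈ jTree S jmp} := by
        intro p hp q hq hpq
        have : hostFn jmp (p ++ [e.1, e.2]) = hostFn jmp (q ++ [e.1, e.2]) := by
          rw [hφe, hφe, hpq]
        exact List.append_cancel_right (hinj this)
      rw [← hinjOn.encard_image]
      apply Set.encard_mono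
      rintro _ ⟨ρ, hρ, rfl⟩
      have := host_mem_of_mem hρ
      rw [hφe] at this
      exact this
    have hAfin : {ρ : List V | ρ ++ [w, a] ∈ S.tree}.Finite := by
      apply hOcc.subset
      intro ρ hρ
      exact S.prefix_closed (ρ ++ [w]) a (by simp) (by simpa using hρ)
    have hxmem : ρi.dropLast ∈ {ρ : List V | ρ ++ [w, a] ∈ S.tree} := by
      show ρi.dropLast ++ [w, a] ∈ S.tree
      rw [show ρi.dropLast ++ [w, a] = (ρi.dropLast ++ [w]) ++ [a] by simp, hρid]
      exact hρia
    obtain ⟨φ, hφe0⟩ := hφ (w, a)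
    have hφe : ∀ ρ : List V, hostFn jmp (ρ ++ [w, a]) = φ ρ ++ [w, a] := hφe0
    have hinjOn : Set.InjOn φ {ρ | ρ ++ [w, a] ∈ jTree S jmp} := by
      intro p hp q hq hpq
      have : hostFn jmp (p ++ [w, a]) = hostFn jmp (q ++ [w, a]) := by
        rw [hφe p, hφe q, hpq]
      exact List.append_cancel_right (hinj this)
    have himg : φ '' {ρ | ρ ++ [w, a] ∈ jTree S jmp} ⊆
        {ρ : List V | ρ ++ [w, a] ∈ S.tree} \ {ρi.dropLast} := by
      rintro _ ⟨ρ, hρ, rfl⟩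
      have hmem0 := host_mem_of_mem hρ
      rw [hφe] at hmem0
      refine ⟨hmem0, ?_⟩
      intro hx
      simp only [Set.mem_singleton_iff] at hx
      have h1 : hostFn jmp (ρ ++ [w, a]) = ρi ++ [a] := by
        rw [hφe, hx, show ρi.dropLast ++ [w, a] = (ρi.dropLast ++ [w]) ++ [a] by simp, hρid]
      rw [hostA] at h1
      by_cases hC : ρi <+: ρ ++ [w, a] ∧ ρi ≠ ρ ++ [w, a]
      · rw [if_pos hC] at h1
        have hlen1 : i + 1 < (ρ ++ [w, a]).length := by
          rcases lt_or_eq_of_le hC.1.length_le with h | h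
          · rw [hρilen] at h; exact h
          · exact absurd (hC.1.eq_of_length h) hC.2
        have hthis := congrArg List.length h1
        simp only [List.length_append, List.length_drop, List.length_cons, List.length_nil,
          hρilen, hρjlen] at hthis hlen1
        omega
      · rw [if_neg hC] at h1
        apply hC
        constructor
        · rw [h1]; exact List.prefix_append _ _
        · intro he
          have h2 := congrArg List.length h1
          have h3 := congrArg List.length he
          rw [hρilen] at h3
          simp [hρilen] at h2
          simp at h3
          omega
    have hlt : S'.edgeCount (w, a) < S.edgeCount (w, a) := by
      show Set.encard {ρ | ρ ++ [w, a] ∈ jTree S jmp} < Set.encard {ρ | ρ ++ [w, a] ∈ S.tree}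
      calc Set.encard {ρ | ρ ++ [w, a] ∈ jTree S jmp}
          = (φ '' {ρ | ρ ++ [w, a] ∈ jTree S jmp}).encard := hinjOn.encard_image.symm
        _ ≤ ({ρ : List V | ρ ++ [w, a] ∈ S.tree} \ {ρi.dropLast}).encard := Set.encard_mono himg
        _ < Set.encard {ρ | ρ ++ [w, a] ∈ S.tree} :=
            (hAfin.subset Set.diff_subset).encard_lt_encard (Set.sdiff_singleton_ssubset.mpr hxmem)
    exact hdom S' ⟨habs, (w, a), hlt⟩
  · -- CASE B : `w` occurs infinitely often in the tree.
    have hOccInf : {ρ : List V | ρ ++ [w] ∈ S.tree}.Infinite := hOcc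
    set Bad : Set (List V) := {σ | ∃ e : V × V, ∃ ρ : List V,
      ρ ++ [e.1, e.2] ∈ S.tree ∧ S.edgeCount e ≠ ⊤ ∧ σ <+: ρ ++ [e.1, e.2]} with hBadDef
    have hBadFin : Bad.Finite := by
      have hsub : Bad ⊆ ⋃ (e : V × V),
          ⋃ ρ ∈ {ρ : List V | ρ ++ [e.1, e.2] ∈ S.tree ∧ S.edgeCount e ≠ ⊤},
            {σ : List V | σ <+: ρ ++ [e.1, e.2]} := by
        rintro σ ⟨e, ρ, h1, h2, h3⟩
        exact Set.mem_iUnion.mpr ⟨e, Set.mem_biUnion ⟨h1, h2⟩ h3⟩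
      apply Set.Finite.subset _ hsub
      apply Set.finite_iUnion
      intro e
      apply Set.Finite.biUnion
      · by_cases hc : S.edgeCount e = ⊤
        · have : {ρ : List V | ρ ++ [e.1, e.2] ∈ S.tree ∧ S.edgeCount e ≠ ⊤} = ∅ := by
            ext ρ; simp [hc]
          rw [this]; exact Set.finite_empty
        · have hf : {ρ : List V | ρ ++ [e.1, e.2] ∈ S.tree}.Finite :=
            Set.encard_ne_top_iff.mp hc
          exact hf.subset (fun ρ h => h.1)
      · intro ρ _
        apply Set.Finite.subset (Set.Finite.image (fun n => (ρ ++ [e.1, e.2]).take n)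
          (Set.finite_Iic (ρ ++ [e.1, e.2]).length))
        intro σ hσ
        exact ⟨σ.length, hσ.length_le, (List.prefix_iff_eq_take.mp hσ).symm⟩
    have hmapInj : Set.InjOn (fun ρ : List V => ρ ++ [w]) {ρ | ρ ++ [w] ∈ S.tree} :=
      fun p _ q _ h => List.append_cancel_right h
    obtain ⟨π', hπ'img, hπ'bad⟩ := ((hOccInf.image hmapInj).diff hBadFin).nonempty
    obtain ⟨ρs, hρsT, rfl⟩ := hπ'img
    simp only [Set.mem_setOf_eq] at hρsT
    obtain ⟨c, hc, hcu⟩ := S.choice0 ρs w hρsT hV0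
    set jmp := fun h : List V => if h.getLast? = some w then ρs ++ [w] else h with hjmp
    have hnil : jmp [] = [] := by rw [hjmp]; simp
    have hmemj : ∀ h ∈ S.tree, jmp h ∈ S.tree := by
      intro h hh
      by_cases hc2 : h.getLast? = some w
      · simp only [hjmp, if_pos hc2]; exact hρsT
      · simp only [hjmp, if_neg hc2]; exact hh
    have hlastj : ∀ h : List V, (jmp h).getLast? = h.getLast? := by
      intro h
      by_cases hc2 : h.getLast? = some w
      · simp only [hjmp, if_pos hc2, List.getLast?_concat, hc2]
      · simp only [hjmp, if_neg hc2]
    set S' := jStrategy S jmp hnil hmemj hlastj with hS'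
    have hdich : ∀ π : List V, hostFn jmp π = π ∨ (ρs ++ [w]) <+: hostFn jmp π := by
      intro π
      induction π using List.reverseRecOn with
      | nil => left; rfl
      | append_singleton σ u ih =>
        rw [hostFn_snoc]
        by_cases hc2 : (hostFn jmp σ).getLast? = some w
        · right
          rw [hjmp] at hc2 ⊢; simp only [if_pos hc2]
          exact List.prefix_append _ _
        · have heq : jmp (hostFn jmp σ) = hostFn jmp σ := by
            rw [hjmp] at hc2 ⊢; simp only [if_neg hc2]
          rw [heq]
          rcases ih with h | h
          · left; rw [h]
          · right; exact h.trans (List.prefix_append _ _)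
    have habs : S'.Absorbs S := by
      intro e
      by_cases htop : S.edgeCount e = ⊤
      · rw [htop]; exact le_top
      · show Set.encard {ρ | ρ ++ [e.1, e.2] ∈ jTree S jmp} ≤ _
        apply Set.encard_mono
        intro ρ hρ
        have hhost : hostFn jmp (ρ ++ [e.1, e.2]) ∈ S.tree := host_mem_of_mem hρ
        rcases hdich (ρ ++ [e.1, e.2]) with h | h
        · show ρ ++ [e.1, e.2] ∈ S.tree; rwa [h] at hhost
        · exfalso
          exact hπ'bad ⟨e, (hostFn jmp (ρ ++ [e.1, e.2])).dropLast.dropLast, by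
            obtain ⟨Z, hZ⟩ := host_edge hlastj ρ e.1 e.2
            have hZd : (hostFn jmp (ρ ++ [e.1, e.2])).dropLast.dropLast = Z := by
              rw [hZ, dropLast_two]
            rw [hZd, ← hZ]
            exact ⟨hhost, htop, h⟩⟩
    set u' := if a = c then b else a with hu'
    have hu'ne : u' ≠ c := by
      by_cases hac : a = c
      · rw [hu', if_pos hac]
        intro hbc; exact hne (hac.trans hbc.symm)
      · rw [hu', if_neg hac]; exact hac
    have hRHS : {ρ : List V | ρ ++ [w, u'] ∈ S.tree}.Nonempty := by
      by_cases hac : a = c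
      · refine ⟨ρj.dropLast, ?_⟩
        show ρj.dropLast ++ [w, u'] ∈ S.tree
        rw [hu', if_pos hac, show ρj.dropLast ++ [w, b] = (ρj.dropLast ++ [w]) ++ [b] by simp,
          hρjd]
        exact hρjb
      · refine ⟨ρi.dropLast, ?_⟩
        show ρi.dropLast ++ [w, u'] ∈ S.tree
        rw [hu', if_neg hac, show ρi.dropLast ++ [w, a] = (ρi.dropLast ++ [w]) ++ [a] by simp,
          hρid]
        exact hρia
    have hzero : {ρ : List V | ρ ++ [w, u'] ∈ jTree S jmp} = ∅ := by
      ext ρ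
      simp only [Set.mem_setOf_eq, Set.mem_empty_iff_false, iff_false]
      intro hρ
      have hhost := host_mem_of_mem hρ
      rw [show ρ ++ [w, u'] = (ρ ++ [w]) ++ [u'] by simp, hostFn_snoc] at hhost
      have hgl : (hostFn jmp (ρ ++ [w])).getLast? = some w := by
        rw [hostFn_getLast? _ _ (by simp), List.getLast?_concat]
      rw [hjmp] at hgl hhost
      simp only [if_pos hgl] at hhost
      exact hu'ne (hcu u' (by simpa using hhost))
    have hlt : S'.edgeCount (w, u') < S.edgeCount (w, u') := by
      show Set.encard {ρ | ρ ++ [w, u'] ∈ jTree S jmp} < Set.encard {ρ | ρ ++ [w, u'] ∈ S.tree}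
      rw [hzero, Set.encard_empty]
      exact Set.encard_pos.mpr hRHS
    exact hdom S' ⟨habs, (w, u'), hlt⟩
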